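/- Let 1 < p < ∞ and ε > 0. There exists a constant C = C(p, ε) > 0 such that for every 0 < λ ≤ 1 and every C² function u : ℝ → ℝ periodic with period 1/λ, ∫₀^{1/λ} |u'(z)|^p dz ≤ C λ ∫₀^{1/λ} |u(z)|^p dz + (ε/λ) ∫₀^{1/λ} |u''(z)|^p dz. -/

import Mathlib

open MeasureTheory Set intervalIntegral


private lemma add_rpow_le' (p : ℝ) (hp : 1 ≤ p) {s t : ℝ} (hs : 0 ≤ s) (ht : 0 ≤ t) :
    (s + t) ^ p ≤ 2 ^ (p - 1) * (s ^ p + t ^ p) := by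
  have h := NNReal.rpow_add_le_mul_rpow_add_rpow ⟨s, hs⟩ ⟨t, ht⟩ hp
  have h2 := NNReal.coe_le_coe.mpr h
  push_cast [NNReal.coe_rpow] at h2
  exact h2

private lemma jensen_abs (p : ℝ) (hp : 1 ≤ p) {f : ℝ → ℝ} (hf : Continuous f)
    {a b : ℝ} (hab : a < b) :
    (∫ x in a..b, |f x|) ^ p ≤ (b - a) ^ (p - 1) * ∫ x in a..b, |f x| ^ p := by
  have hL : (0:ℝ) < b - a := by linarith
  set μ := volume.restrict (Ioc a b) with hμ
  have huniv : μ univ = ENNReal.ofReal (b - a) := by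
    rw [hμ, Measure.restrict_apply_univ, Real.volume_Ioc]
  haveI : IsFiniteMeasure μ := ⟨by rw [huniv]; exact ENNReal.ofReal_lt_top⟩
  haveI : NeZero μ := ⟨by
    intro h
    rw [h] at huniv
    simp [ENNReal.ofReal_eq_zero, eq_comm] at huniv
    linarith⟩
  have hcont : Continuous fun x => |f x| ^ p := by
    exact hf.abs.rpow_const fun x => Or.inr (by linarith)
  have hJ := (convexOn_rpow hp).map_average_le (μ := μ)
    (continuousOn_id.rpow_const fun x _ => Or.inr (by linarith)) isClosed_Ici
    (Filter.Eventually.of_forall fun x => abs_nonneg (f x))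
    (hf.abs.integrableOn_Ioc) (hcont.integrableOn_Ioc)
  rw [average_eq, average_eq, measureReal_def, huniv, ENNReal.toReal_ofReal hL.le, smul_eq_mul, smul_eq_mul] at hJ
  have e1 : ∫ x, |f x| ∂μ = ∫ x in a..b, |f x| := (integral_of_le hab.le).symm
  have e2 : (∫ x, |f x| ^ p ∂μ) = ∫ x in a..b, |f x| ^ p := (integral_of_le hab.le).symm
  rw [e1, e2] at hJ
  have hI1 : 0 ≤ ∫ x in a..b, |f x| :=
    intervalIntegral.integral_nonneg hab.le fun x _ => abs_nonneg _
  calc (∫ x in a..b, |f x|) ^ p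
      = ((b - a) * ((b - a)⁻¹ * ∫ x in a..b, |f x|)) ^ p := by
        field_simp
    _ = (b - a) ^ p * ((b - a)⁻¹ * ∫ x in a..b, |f x|) ^ p := by
        rw [Real.mul_rpow hL.le (by positivity)]
    _ ≤ (b - a) ^ p * ((b - a)⁻¹ * ∫ x in a..b, |f x| ^ p) := by
        apply mul_le_mul_of_nonneg_left hJ (by positivity)
    _ = (b - a) ^ (p - 1) * ∫ x in a..b, |f x| ^ p := by
        rw [Real.rpow_sub hL, Real.rpow_one]
        ring


private lemma pointwise_bound {u : ℝ → ℝ} (hu : ContDiff ℝ 2 u) {a b x : ℝ} (hab : a < b)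
    (hx : x ∈ Icc a b) :
    |deriv u x| ≤ (6 / (b - a) ^ 2) * (∫ t in a..b, |u t|)
      + 6 * ∫ t in a..b, |deriv (deriv u) t| := by
  have hpair := contDiff_succ_iff_deriv.mp (show ContDiff ℝ ((1:ℕ)+1) u from by exact_mod_cast hu)
  have hd1 : Differentiable ℝ u := hpair.1
  have h1 : ContDiff ℝ 1 (deriv u) := hpair.2.2
  have hpair2 := contDiff_succ_iff_deriv.mp (show ContDiff ℝ ((0:ℕ)+1) (deriv u) from by exact_mod_cast h1)
  have hd2 : Differentiable ℝ (deriv u) := hpair2.1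
  have hc2 : Continuous (deriv (deriv u)) := hpair2.2.2.continuous
  have hc1 : Continuous (deriv u) := h1.continuous
  have hc0 : Continuous u := hu.continuous
  set M : ℝ := ∫ t in a..b, |deriv (deriv u) t| with hMdef
  have hM : 0 ≤ M := intervalIntegral.integral_nonneg hab.le fun t _ => abs_nonneg _
  -- step 1 : |u'(r) - u'(x)| ≤ M on [a,b]
  have key1 : ∀ r ∈ Icc a b, |deriv u r - deriv u x| ≤ M := by
    intro r hr
    have hftc : deriv u r - deriv u x = ∫ s in x..r, deriv (deriv u) s :=
      (integral_deriv_eq_sub (fun y _ => hd2 y) (hc2.intervalIntegrable _ _)).symm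
    rw [hftc]
    rcases le_total x r with h | h
    · have h1' : |∫ s in x..r, deriv (deriv u) s| ≤ ∫ s in x..r, |deriv (deriv u) s| :=
        abs_integral_le_integral_abs h
      have h2' : (∫ s in x..r, |deriv (deriv u) s|) ≤ M :=
        integral_mono_interval hx.1 h hr.2 (ae_of_all _ fun t => abs_nonneg _)
          ((hc2.abs).intervalIntegrable _ _)
      linarith
    · rw [integral_symm, abs_neg]
      have h1' : |∫ s in r..x, deriv (deriv u) s| ≤ ∫ s in r..x, |deriv (deriv u) s| :=
        abs_integral_le_integral_abs h
      have h2' : (∫ s in r..x, |deriv (deriv u) s|) ≤ M :=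
        integral_mono_interval hr.1 h hx.2 (ae_of_all _ fun t => abs_nonneg _)
          ((hc2.abs).intervalIntegrable _ _)
      linarith
  set A : ℝ := u x
  set B : ℝ := deriv u x
  set R : ℝ → ℝ := fun t => u t - A - B * (t - x) with hRdef
  have hRcont : Continuous R := by
    apply (hc0.sub continuous_const).sub
    exact continuous_const.mul (continuous_id.sub continuous_const)
  -- step 2 : |R t| ≤ (b-a) * M on [a,b]
  have hR : ∀ t ∈ Icc a b, |R t| ≤ (b - a) * M := by
    intro t ht
    have hrepr : R t = ∫ s in x..t, (deriv u s - deriv u x) := by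
      rw [intervalIntegral.integral_sub (hc1.intervalIntegrable _ _) intervalIntegrable_const,
        integral_deriv_eq_sub (fun y _ => hd1 y) (hc1.intervalIntegrable _ _),
        intervalIntegral.integral_const, smul_eq_mul]
      simp only [hRdef]; ring
    have hbd : ‖∫ s in x..t, (deriv u s - deriv u x)‖ ≤ M * |t - x| := by
      apply intervalIntegral.norm_integral_le_of_norm_le_const
      intro s hs
      have hs' : s ∈ Icc a b := by
        constructor
        · have : a ≤ min x t := le_min hx.1 ht.1
          exact le_of_lt (lt_of_le_of_lt this hs.1)
        · exact le_trans hs.2 (max_le hx.2 ht.2)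
      simpa [Real.norm_eq_abs] using key1 s hs'
    have htx : |t - x| ≤ b - a := abs_le.mpr ⟨by linarith [ht.1, ht.2, hx.1, hx.2],
      by linarith [ht.1, ht.2, hx.1, hx.2]⟩
    rw [hrepr]
    calc |∫ s in x..t, (deriv u s - deriv u x)| ≤ M * |t - x| := by
          simpa [Real.norm_eq_abs] using hbd
      _ ≤ (b - a) * M := by nlinarith
  set c : ℝ := (a + b) / 2 with hc
  -- step 3 : polynomial identity
  have hpoly : (∫ t in a..b, (t - c) * (A + B * (t - x))) = B * (b - a) ^ 3 / 12 := by
    have hder : ∀ t : ℝ, HasDerivAt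
        (fun t : ℝ => B / 3 * t ^ 3 + (A - B * x - B * c) / 2 * t ^ 2 + (B * x * c - A * c) * t)
        ((t - c) * (A + B * (t - x))) t := by
      intro t
      have h1' := (hasDerivAt_pow 3 t).const_mul (B / 3)
      have h2' := (hasDerivAt_pow 2 t).const_mul ((A - B * x - B * c) / 2)
      have h3' := (hasDerivAt_id t).const_mul (B * x * c - A * c)
      have := (h1'.add h2').add h3'
      refine this.congr_deriv ?_
      push_cast; ring
    rw [integral_eq_sub_of_hasDerivAt (fun t _ => hder t)
      (((continuous_id.sub continuous_const).mul
        (continuous_const.add (continuous_const.mul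
          (continuous_id.sub continuous_const)))).intervalIntegrable _ _)]
    rw [hc]; ring
  -- step 4 : split
  have int1 : IntervalIntegrable (fun t => (t - c) * u t) volume a b :=
    ((continuous_id.sub continuous_const).mul hc0).intervalIntegrable _ _
  have int2 : IntervalIntegrable (fun t => (t - c) * R t) volume a b :=
    ((continuous_id.sub continuous_const).mul hRcont).intervalIntegrable _ _
  have hsplit : (∫ t in a..b, (t - c) * (A + B * (t - x)))
      = (∫ t in a..b, (t - c) * u t) - ∫ t in a..b, (t - c) * R t := by
    rw [← intervalIntegral.integral_sub int1 int2]
    congr 1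
    funext t
    simp only [hRdef]; ring
  -- step 5 : bounds
  have b1 : |∫ t in a..b, (t - c) * u t| ≤ ((b - a) / 2) * ∫ t in a..b, |u t| := by
    calc |∫ t in a..b, (t - c) * u t| ≤ ∫ t in a..b, |(t - c) * u t| :=
          abs_integral_le_integral_abs hab.le
      _ ≤ ∫ t in a..b, ((b - a) / 2) * |u t| := by
          apply integral_mono_on hab.le (int1.abs)
            ((continuous_const.mul hc0.abs).intervalIntegrable _ _)
          intro t ht
          rw [abs_mul]
          apply mul_le_mul_of_nonneg_right _ (abs_nonneg _)
          rw [hc]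
          apply abs_le.mpr
          constructor <;> [skip; skip] <;> cases' ht with h1 h2 <;> linarith
      _ = ((b - a) / 2) * ∫ t in a..b, |u t| := integral_const_mul _ _
  have b2 : |∫ t in a..b, (t - c) * R t| ≤ ((b - a) / 2 * ((b - a) * M)) * (b - a) := by
    have := intervalIntegral.norm_integral_le_of_norm_le_const
      (C := (b - a) / 2 * ((b - a) * M)) (f := fun t => (t - c) * R t) (a := a) (b := b) ?_
    · rw [Real.norm_eq_abs] at this
      calc |∫ t in a..b, (t - c) * R t| ≤ (b - a) / 2 * ((b - a) * M) * |b - a| := this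
        _ = ((b - a) / 2 * ((b - a) * M)) * (b - a) := by rw [abs_of_pos (by linarith)]
    · intro t ht
      have ht' : t ∈ Icc a b := by
        rw [uIoc_of_le hab.le] at ht
        exact ⟨ht.1.le, ht.2⟩
      rw [Real.norm_eq_abs, abs_mul]
      have h1' : |t - c| ≤ (b - a) / 2 := by
        rw [hc]; apply abs_le.mpr; cases' ht' with h1 h2; constructor <;> linarith
      have h2' := hR t ht'
      have := mul_le_mul h1' h2' (abs_nonneg _) (by linarith)
      linarith
  -- conclude
  have hI : 0 ≤ ∫ t in a..b, |u t| := intervalIntegral.integral_nonneg hab.le fun t _ => abs_nonneg _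
  have habs : |B| * ((b - a) ^ 3 / 12) ≤ ((b - a) / 2) * (∫ t in a..b, |u t|)
      + ((b - a) / 2 * ((b - a) * M)) * (b - a) := by
    have heq : |B| * ((b - a) ^ 3 / 12) = |B * (b - a) ^ 3 / 12| := by
      rw [abs_div, abs_mul, abs_of_pos (show (0:ℝ) < (b-a)^3 from pow_pos (by linarith) 3),
        abs_of_pos (show (0:ℝ) < 12 by norm_num)]
      ring
    rw [heq, ← hpoly, hsplit]
    calc |(∫ t in a..b, (t - c) * u t) - ∫ t in a..b, (t - c) * R t|
        ≤ |∫ t in a..b, (t - c) * u t| + |∫ t in a..b, (t - c) * R t| := abs_sub _ _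
      _ ≤ _ := add_le_add b1 b2
  have hpos : (0:ℝ) < (b - a) ^ 3 / 12 := div_pos (pow_pos (by linarith) 3) (by norm_num)
  refine le_of_mul_le_mul_right ?_ hpos
  calc |B| * ((b - a) ^ 3 / 12)
      ≤ ((b - a) / 2) * (∫ t in a..b, |u t|) + ((b - a) / 2 * ((b - a) * M)) * (b - a) := habs
    _ = (6 / (b - a) ^ 2 * (∫ t in a..b, |u t|) + 6 * M) * ((b - a) ^ 3 / 12) := by
        have hba : b - a ≠ 0 := by linarith
        field_simp
        ring

private lemma interval_bound (p : ℝ) (hp : 1 < p) {u : ℝ → ℝ} (hu : ContDiff ℝ 2 u)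
    {a L : ℝ} (hL : 0 < L) :
    (∫ x in a..(a+L), |deriv u x| ^ p) ≤
      2 ^ (p-1) * 6 ^ p * ((L⁻¹) ^ p * (∫ x in a..(a+L), |u x| ^ p)
        + L ^ p * ∫ x in a..(a+L), |deriv (deriv u) x| ^ p) := by
  have hab : a < a + L := by linarith
  have hpair := contDiff_succ_iff_deriv.mp (show ContDiff ℝ ((1:ℕ)+1) u from by exact_mod_cast hu)
  have h1 : ContDiff ℝ 1 (deriv u) := hpair.2.2
  have hpair2 := contDiff_succ_iff_deriv.mp
    (show ContDiff ℝ ((0:ℕ)+1) (deriv u) from by exact_mod_cast h1)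
  have hc2 : Continuous (deriv (deriv u)) := hpair2.2.2.continuous
  have hc1 : Continuous (deriv u) := h1.continuous
  have hc0 : Continuous u := hu.continuous
  set I₁ : ℝ := ∫ t in a..(a+L), |u t| with hI₁
  set M : ℝ := ∫ t in a..(a+L), |deriv (deriv u) t| with hM
  have hI₁0 : 0 ≤ I₁ := intervalIntegral.integral_nonneg hab.le fun t _ => abs_nonneg _
  have hM0 : 0 ≤ M := intervalIntegral.integral_nonneg hab.le fun t _ => abs_nonneg _
  set P₁ : ℝ := ∫ x in a..(a+L), |u x| ^ p with hP₁
  set P₂ : ℝ := ∫ x in a..(a+L), |deriv (deriv u) x| ^ p with hP₂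
  have hp0 : (0:ℝ) ≤ p := by linarith
  -- pointwise bound on the p-th power
  have hpt : ∀ x ∈ Icc a (a+L), |deriv u x| ^ p
      ≤ 2 ^ (p-1) * ((6 / L ^ 2 * I₁) ^ p + (6 * M) ^ p) := by
    intro x hx
    have h := pointwise_bound hu hab hx
    rw [show a + L - a = L by ring] at h
    have h6 : (0:ℝ) ≤ 6 / L ^ 2 * I₁ := by positivity
    have h6' : (0:ℝ) ≤ 6 * M := by positivity
    calc |deriv u x| ^ p ≤ (6 / L ^ 2 * I₁ + 6 * M) ^ p :=
          Real.rpow_le_rpow (abs_nonneg _) h hp0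
      _ ≤ 2 ^ (p-1) * ((6 / L ^ 2 * I₁) ^ p + (6 * M) ^ p) := add_rpow_le' p hp.le h6 h6'
  -- integrate
  have hint : IntervalIntegrable (fun x => |deriv u x| ^ p) volume a (a+L) :=
    (hc1.abs.rpow_const fun x => Or.inr hp0).intervalIntegrable _ _
  have hstep : (∫ x in a..(a+L), |deriv u x| ^ p)
      ≤ L * (2 ^ (p-1) * ((6 / L ^ 2 * I₁) ^ p + (6 * M) ^ p)) := by
    have := integral_mono_on hab.le hint intervalIntegrable_const hpt
    rwa [intervalIntegral.integral_const, smul_eq_mul, show a + L - a = L by ring] at this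
  -- Jensen
  have hJ1 : I₁ ^ p ≤ L ^ (p-1) * P₁ := by
    have := jensen_abs p hp.le hc0 hab
    rwa [show a + L - a = L by ring] at this
  have hJ2 : M ^ p ≤ L ^ (p-1) * P₂ := by
    have := jensen_abs p hp.le hc2 hab
    rwa [show a + L - a = L by ring] at this
  have hP₁0 : 0 ≤ P₁ := intervalIntegral.integral_nonneg hab.le fun t _ => by positivity
  have hP₂0 : 0 ≤ P₂ := intervalIntegral.integral_nonneg hab.le fun t _ => by positivity
  -- rpow algebra
  have hLp : (0:ℝ) < L ^ p := Real.rpow_pos_of_pos hL p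
  have c2' : L * L ^ (p-1) = L ^ p := by
    have e : p - 1 + 1 = p := by ring
    rw [← e, Real.rpow_add_one hL.ne']; ring
  have hdiv : (6 / L ^ 2 * I₁) ^ p = (6 / L ^ 2) ^ p * I₁ ^ p :=
    Real.mul_rpow (by positivity) hI₁0
  have hd2 : (6 / L ^ 2 : ℝ) ^ p = 6 ^ p / (L ^ p * L ^ p) := by
    rw [Real.div_rpow (by norm_num) (sq_nonneg L), ← Real.rpow_natCast L 2,
      ← Real.rpow_mul hL.le, show ((2:ℕ):ℝ) * p = p + p by push_cast; ring,
      Real.rpow_add hL]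
  have h6M : (6 * M : ℝ) ^ p = 6 ^ p * M ^ p := Real.mul_rpow (by norm_num) hM0
  have hinv : (L⁻¹) ^ p = (L ^ p)⁻¹ := Real.inv_rpow hL.le p
  calc (∫ x in a..(a+L), |deriv u x| ^ p)
      ≤ L * (2 ^ (p-1) * ((6 / L ^ 2 * I₁) ^ p + (6 * M) ^ p)) := hstep
    _ ≤ L * (2 ^ (p-1) * ((6 / L ^ 2) ^ p * (L ^ (p-1) * P₁) + 6 ^ p * (L ^ (p-1) * P₂))) := by
        apply mul_le_mul_of_nonneg_left _ hL.le
        apply mul_le_mul_of_nonneg_left _ (by positivity)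
        rw [hdiv, h6M]
        exact add_le_add (mul_le_mul_of_nonneg_left hJ1 (by positivity))
          (mul_le_mul_of_nonneg_left hJ2 (by positivity))
    _ = L * (2 ^ (p-1) * ((6 ^ p / (L ^ p * L ^ p)) * (L ^ (p-1) * P₁)
          + 6 ^ p * (L ^ (p-1) * P₂))) := by rw [hd2]
    _ = 2 ^ (p-1) * 6 ^ p * ((L ^ p)⁻¹ * P₁ + L ^ p * P₂) := by
        have key1 : L * (6 ^ p / (L ^ p * L ^ p)) * L ^ (p-1) = 6 ^ p * (L ^ p)⁻¹ := by
          rw [show L * (6 ^ p / (L ^ p * L ^ p)) * L ^ (p-1) = 6 ^ p * (L * L ^ (p-1)) / (L ^ p * L ^ p) by ring, c2']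
          field_simp
        have key2 : L * 6 ^ p * L ^ (p-1) = 6 ^ p * L ^ p := by
          rw [show L * 6 ^ p * L ^ (p-1) = 6 ^ p * (L * L ^ (p-1)) from by ring, c2']
        linear_combination P₁ * 2 ^ (p-1) * key1 + P₂ * 2 ^ (p-1) * key2
    _ = 2 ^ (p-1) * 6 ^ p * ((L⁻¹) ^ p * P₁ + L ^ p * P₂) := by rw [hinv]

set_option maxHeartbeats 1000000 in
/-- **1D Sobolev interpolation inequality on a torus of period `1/λ`.**
For `1 < p < ∞` and `ε > 0` there is a constant `C = C(p, ε) > 0` such that for every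
`0 < λ ≤ 1` and every `C²` function `u : ℝ → ℝ` of period `1/λ`,
`∫₀^{1/λ} |u'|^p ≤ C λ ∫₀^{1/λ} |u|^p + (ε/λ) ∫₀^{1/λ} |u''|^p`. -/
theorem stmt6 (p ε : ℝ) (hp : 1 < p) (hε : 0 < ε) :
    ∃ C : ℝ, 0 < C ∧ ∀ lam : ℝ, 0 < lam → lam ≤ 1 →
      ∀ u : ℝ → ℝ, ContDiff ℝ 2 u → (∀ z : ℝ, u (z + 1 / lam) = u z) →
        (∫ z in (0:ℝ)..(1 / lam), |deriv u z| ^ p) ≤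
          C * lam * (∫ z in (0:ℝ)..(1 / lam), |u z| ^ p) +
            (ε / lam) * ∫ z in (0:ℝ)..(1 / lam), |deriv (deriv u) z| ^ p := by
  have hp0 : (0:ℝ) < p := by linarith
  set K : ℝ := 2 ^ (p-1) * 6 ^ p with hKdef
  have hK : 0 < K := by positivity
  set c₂ : ℝ := (K / ε) ^ p⁻¹ with hc₂
  have hc₂0 : 0 < c₂ := Real.rpow_pos_of_pos (by positivity) _
  refine ⟨K * (c₂ + 1) ^ p, by positivity, ?_⟩
  intro lam hlam hlam1 u hu _hper
  -- derivative continuity facts (for integrability)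
  have hpair := contDiff_succ_iff_deriv.mp (show ContDiff ℝ ((1:ℕ)+1) u from by exact_mod_cast hu)
  have h1 : ContDiff ℝ 1 (deriv u) := hpair.2.2
  have hpair2 := contDiff_succ_iff_deriv.mp
    (show ContDiff ℝ ((0:ℕ)+1) (deriv u) from by exact_mod_cast h1)
  have hc2 : Continuous (deriv (deriv u)) := hpair2.2.2.continuous
  have hc1 : Continuous (deriv u) := h1.continuous
  have hc0 : Continuous u := hu.continuous
  have hf1 : Continuous fun x => |deriv u x| ^ p :=
    hc1.abs.rpow_const fun x => Or.inr hp0.le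
  have hf0 : Continuous fun x => |u x| ^ p := hc0.abs.rpow_const fun x => Or.inr hp0.le
  have hf2 : Continuous fun x => |deriv (deriv u) x| ^ p :=
    hc2.abs.rpow_const fun x => Or.inr hp0.le
  -- the mesh
  set δ : ℝ := (ε / (K * lam)) ^ p⁻¹ with hδdef
  have hδ : 0 < δ := Real.rpow_pos_of_pos (by positivity) _
  set N : ℕ := ⌈1 / (lam * δ)⌉₊ with hNdef
  have hN1 : 1 ≤ N := Nat.one_le_iff_ne_zero.mpr (by
    apply Nat.ceil_pos.mpr (by positivity) |>.ne')
  have hNpos : (0:ℝ) < N := by exact_mod_cast Nat.pos_of_ne_zero (by omega)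
  set L : ℝ := 1 / (N * lam) with hLdef
  have hL : 0 < L := by positivity
  -- grid
  set a : ℕ → ℝ := fun k => k * L with hadef
  have ha0 : a 0 = 0 := by simp [hadef]
  have haN : a N = 1 / lam := by
    rw [hadef, hLdef]
    field_simp
  have hastep : ∀ k : ℕ, a (k + 1) = a k + L := by
    intro k; rw [hadef]; push_cast; ring
  -- split the three integrals
  have hsum1 : ∑ k ∈ Finset.range N, (∫ x in a k..a (k+1), |deriv u x| ^ p)
      = ∫ z in (0:ℝ)..(1/lam), |deriv u z| ^ p := by
    rw [sum_integral_adjacent_intervals (fun k _ => hf1.intervalIntegrable _ _), ha0, haN]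
  have hsum0 : ∑ k ∈ Finset.range N, (∫ x in a k..a (k+1), |u x| ^ p)
      = ∫ z in (0:ℝ)..(1/lam), |u z| ^ p := by
    rw [sum_integral_adjacent_intervals (fun k _ => hf0.intervalIntegrable _ _), ha0, haN]
  have hsum2 : ∑ k ∈ Finset.range N, (∫ x in a k..a (k+1), |deriv (deriv u) x| ^ p)
      = ∫ z in (0:ℝ)..(1/lam), |deriv (deriv u) z| ^ p := by
    rw [sum_integral_adjacent_intervals (fun k _ => hf2.intervalIntegrable _ _), ha0, haN]
  -- per-interval bound
  have hper' : ∀ k : ℕ, (∫ x in a k..a (k+1), |deriv u x| ^ p)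
      ≤ K * (L⁻¹) ^ p * (∫ x in a k..a (k+1), |u x| ^ p)
        + K * L ^ p * (∫ x in a k..a (k+1), |deriv (deriv u) x| ^ p) := by
    intro k
    have := interval_bound p hp hu (a := a k) hL
    rw [← hastep k] at this
    calc (∫ x in a k..a (k+1), |deriv u x| ^ p) ≤ _ := this
      _ = K * (L⁻¹) ^ p * (∫ x in a k..a (k+1), |u x| ^ p)
          + K * L ^ p * (∫ x in a k..a (k+1), |deriv (deriv u) x| ^ p) := by
        rw [hKdef]; ring
  -- sum up
  have htotal : (∫ z in (0:ℝ)..(1/lam), |deriv u z| ^ p)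
      ≤ K * (L⁻¹) ^ p * (∫ z in (0:ℝ)..(1/lam), |u z| ^ p)
        + K * L ^ p * ∫ z in (0:ℝ)..(1/lam), |deriv (deriv u) z| ^ p := by
    rw [← hsum1, ← hsum0, ← hsum2, Finset.mul_sum, Finset.mul_sum, ← Finset.sum_add_distrib]
    exact Finset.sum_le_sum fun k _ => hper' k
  -- integrals are nonnegative
  have hQ1 : 0 ≤ ∫ z in (0:ℝ)..(1/lam), |u z| ^ p :=
    intervalIntegral.integral_nonneg (by positivity) fun t _ => by positivity
  have hQ2 : 0 ≤ ∫ z in (0:ℝ)..(1/lam), |deriv (deriv u) z| ^ p :=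
    intervalIntegral.integral_nonneg (by positivity) fun t _ => by positivity
  -- coefficient bounds
  have hLδ : L ≤ δ := by
    have h1' : 1 / (lam * δ) ≤ (N:ℝ) := Nat.le_ceil _
    rw [hLdef, div_le_iff₀ (by positivity)]
    rw [div_le_iff₀ (by positivity)] at h1'
    nlinarith
  have hcoef2 : K * L ^ p ≤ ε / lam := by
    have h1' : L ^ p ≤ δ ^ p := Real.rpow_le_rpow hL.le hLδ hp0.le
    have h2' : δ ^ p = ε / (K * lam) := Real.rpow_inv_rpow (by positivity) hp0.ne'
    calc K * L ^ p ≤ K * δ ^ p := by nlinarith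
      _ = ε / lam := by rw [h2']; field_simp
  have hcoef1 : K * (L⁻¹) ^ p ≤ (K * (c₂ + 1) ^ p) * lam := by
    have hNle : (N:ℝ) ≤ 1 / (lam * δ) + 1 := (Nat.ceil_lt_add_one (by positivity)).le
    have hinvL : L⁻¹ = N * lam := by rw [hLdef]; field_simp
    have hδinv : δ⁻¹ = c₂ * lam ^ p⁻¹ := by
      rw [hδdef, ← Real.inv_rpow (by positivity), hc₂]
      rw [← Real.mul_rpow (by positivity) hlam.le]
      congr 1
      field_simp
    have hlamle : lam ≤ lam ^ p⁻¹ := by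
      have := Real.rpow_le_rpow_of_exponent_ge hlam hlam1
        (show p⁻¹ ≤ 1 by rw [inv_le_one_iff₀]; right; linarith)
      rwa [Real.rpow_one] at this
    have hLinv : L⁻¹ ≤ (c₂ + 1) * lam ^ p⁻¹ := by
      rw [hinvL]
      calc (N:ℝ) * lam ≤ (1 / (lam * δ) + 1) * lam :=
            mul_le_mul_of_nonneg_right hNle hlam.le
        _ = δ⁻¹ + lam := by field_simp
        _ ≤ c₂ * lam ^ p⁻¹ + lam ^ p⁻¹ := by rw [hδinv]; linarith
        _ = (c₂ + 1) * lam ^ p⁻¹ := by ring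
    have h1' : (L⁻¹) ^ p ≤ ((c₂ + 1) * lam ^ p⁻¹) ^ p :=
      Real.rpow_le_rpow (by positivity) hLinv hp0.le
    have h2' : ((c₂ + 1) * lam ^ p⁻¹) ^ p = (c₂ + 1) ^ p * lam := by
      rw [Real.mul_rpow (by positivity) (by positivity),
        Real.rpow_inv_rpow hlam.le hp0.ne']
    calc K * (L⁻¹) ^ p ≤ K * ((c₂ + 1) ^ p * lam) := by
          rw [← h2']; nlinarith
      _ = (K * (c₂ + 1) ^ p) * lam := by ring
  calc (∫ z in (0:ℝ)..(1/lam), |deriv u z| ^ p)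
      ≤ K * (L⁻¹) ^ p * (∫ z in (0:ℝ)..(1/lam), |u z| ^ p)
        + K * L ^ p * ∫ z in (0:ℝ)..(1/lam), |deriv (deriv u) z| ^ p := htotal
    _ ≤ (K * (c₂ + 1) ^ p) * lam * (∫ z in (0:ℝ)..(1/lam), |u z| ^ p)
        + (ε / lam) * ∫ z in (0:ℝ)..(1/lam), |deriv (deriv u) z| ^ p := by
        exact add_le_add (mul_le_mul_of_nonneg_right hcoef1 hQ1)
          (mul_le_mul_of_nonneg_right hcoef2 hQ2)
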